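/- Let G be a finite group, K ⊆ G a normal subgroup, and K ⊆ H₁, …, Hₙ ⊆ G subgroups such that the set {H₁, …, Hₙ} is closed under conjugation by elements of G. Then the transfer system generated by the relations (K, Hᵢ) equals {(M,M) : M ⊆ G} ∪ ⋃ᵢ {(M ∩ K, M) : M ⊆ Hᵢ}. -/
import Mathlib

open Pointwise

/-- Conjugate of a subgroup: `conjS g H = g H g⁻¹`. -/
def conjS {G : Type} [Group G] (g : G) (H : Subgroup G) : Subgroup G :=
  MulAut.conj g • H

/-- A `G`-transfer system: a partial order on the subgroups of `G` refining
inclusion, closed under conjugation and restriction. -/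
structure TransferSystem (G : Type) [Group G] where
  rel : Subgroup G → Subgroup G → Prop
  le_of_rel : ∀ K H : Subgroup G, rel K H → K ≤ H
  refl : ∀ H : Subgroup G, rel H H
  antisymm : ∀ K H : Subgroup G, rel K H → rel H K → K = H
  trans : ∀ J K H : Subgroup G, rel J K → rel K H → rel J H
  conj : ∀ (K H : Subgroup G) (g : G), rel K H → rel (conjS g K) (conjS g H)
  res : ∀ K H L : Subgroup G, rel K H → L ≤ H → rel (K ⊓ L) L

/-- The transfer system generated by a relation `R`, described as a relation:
`genRel R K H` holds iff every transfer system containing `R` relates `K` to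
`H`; i.e. it is the smallest transfer system containing `R`. -/
def genRel {G : Type} [Group G] (R : Subgroup G → Subgroup G → Prop)
    (K H : Subgroup G) : Prop :=
  ∀ T : TransferSystem G, (∀ A B, R A B → T.rel A B) → T.rel K H

lemma conjS_inf {G : Type} [Group G] (g : G) (H H' : Subgroup G) :
    conjS g (H ⊓ H') = conjS g H ⊓ conjS g H' := by
  ext x
  simp [conjS, Subgroup.mem_pointwise_smul_iff_inv_smul_mem]

lemma conjS_mono {G : Type} [Group G] (g : G) {H H' : Subgroup G} (h : H ≤ H') :
    conjS g H ≤ conjS g H' := by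
  simp only [conjS]
  exact Subgroup.pointwise_smul_le_pointwise_smul_iff.2 h

lemma conjS_normal {G : Type} [Group G] (g : G) {K : Subgroup G} (hK : K.Normal) :
    conjS g K = K := by
  ext x
  simp only [conjS, Subgroup.mem_pointwise_smul_iff_inv_smul_mem,
    MulAut.smul_def, MulAut.conj_inv_apply]
  constructor
  · intro h
    have h2 := hK.conj_mem _ h g
    have : g * (g⁻¹ * x * g) * g⁻¹ = x := by group
    rwa [this] at h2
  · intro h
    have h2 := hK.conj_mem _ h g⁻¹
    rwa [inv_inv] at h2

/-- Let `K ⊆ G` be normal, and `K ⊆ H₁, …, Hₙ ⊆ G` subgroups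
whose set is closed under conjugation.  The transfer system generated by the
pairs `(K, Hᵢ)` is `{(M, M) : M ⊆ G} ∪ ⋃ᵢ {(M ⊓ K, M) : M ≤ Hᵢ}`. -/
theorem stmt9 {G : Type} [Group G] [Finite G] (K : Subgroup G) (hK : K.Normal)
    (n : ℕ) (Hs : Fin n → Subgroup G) (hle : ∀ i, K ≤ Hs i)
    (hconj : ∀ (g : G) (i : Fin n), ∃ j, conjS g (Hs i) = Hs j) :
    ∀ A B : Subgroup G,
      genRel (fun A B => A = K ∧ ∃ i, B = Hs i) A B ↔
        (A = B ∨ ∃ i, B ≤ Hs i ∧ A = B ⊓ K) := by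
  intro A B
  constructor
  · intro hgen
    set T : TransferSystem G :=
      { rel := fun A B => A = B ∨ ∃ i, B ≤ Hs i ∧ A = B ⊓ K
        le_of_rel := by
          rintro X Y (rfl | ⟨i, hi, rfl⟩)
          · exact le_rfl
          · exact inf_le_left
        refl := fun H => Or.inl rfl
        antisymm := by
          rintro X Y h1 h2
          rcases h1 with rfl | ⟨i, hi, rfl⟩
          · rfl
          rcases h2 with h | ⟨j, hj, h⟩
          · exact h.symm
          · rw [inf_assoc, inf_idem] at h
            exact h.symm
        trans := by
          rintro X Y Z h1 h2
          rcases h1 with rfl | ⟨i, hi, rfl⟩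
          · exact h2
          rcases h2 with rfl | ⟨j, hj, rfl⟩
          · exact Or.inr ⟨i, hi, rfl⟩
          · exact Or.inr ⟨j, hj, by rw [inf_assoc, inf_idem]⟩
        conj := by
          rintro X Y g (rfl | ⟨i, hi, rfl⟩)
          · exact Or.inl rfl
          · obtain ⟨j, hj⟩ := hconj g i
            refine Or.inr ⟨j, hj ▸ conjS_mono g hi, ?_⟩
            rw [conjS_inf, conjS_normal g hK]
        res := by
          rintro X Y L h hL
          rcases h with rfl | ⟨i, hi, rfl⟩
          · exact Or.inl (inf_eq_right.2 hL)
          · refine Or.inr ⟨i, le_trans hL hi, ?_⟩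
            rw [inf_right_comm, inf_eq_right.2 hL] }
    refine hgen T ?_
    rintro X Y ⟨rfl, i, rfl⟩
    exact Or.inr ⟨i, le_rfl, (inf_eq_right.2 (hle i)).symm⟩
  · rintro (rfl | ⟨i, hi, rfl⟩) T hT
    · exact T.refl A
    · have h1 : T.rel K (Hs i) := hT _ _ ⟨rfl, i, rfl⟩
      have h2 := T.res K (Hs i) B h1 hi
      rwa [inf_comm] at h2
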